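/- arXiv:0909.4547 — 5 statements merged into one kernel-verified Lean document; each statement's English description precedes it below -/
import Mathlib

section
/- Let M be a matroid on ground set E with a fixed linear order, and for 0 ≤ i ≤ r(M) let nbc_i(M) denote the number of independent sets of size i containing no broken circuit. Then nbc_i(M) = (−1)^i times the coefficient of t^{r(M)−i} in the characteristic polynomial of M (equivalently, nbc_i(M) is the i-th Whitney number of the first kind up to sign). -/
open scoped Classical
open Polynomial Finset

variable {α : Type*}

/-- A circuit of a matroid: a minimal dependent (finite) set. -/
def IsCircuit (M : Matroid α) (C : Finset α) : Prop :=
  M.Dep (C : Set α) ∧ ∀ D : Finset α, D ⊂ C → M.Indep (D : Set α)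

/-- A broken circuit with respect to a linear order: a circuit with its largest
element removed. -/
def IsBrokenCircuit [LinearOrder α] (M : Matroid α) (B : Finset α) : Prop :=
  ∃ C : Finset α, IsCircuit M C ∧ ∃ u ∈ C, (∀ v ∈ C, v ≤ u) ∧ B = C.erase u

/-- `S` contains no broken circuit. -/
def NoBrokenCircuit [LinearOrder α] (M : Matroid α) (S : Finset α) : Prop :=
  ∀ B : Finset α, IsBrokenCircuit M B → ¬ B ⊆ S

/-- The rank of a finite set in a matroid: the maximal size of an independent subset. -/
noncomputable def mrank (M : Matroid α) (S : Finset α) : ℕ :=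
  (S.powerset.filter fun T : Finset α => M.Indep (T : Set α)).sup Finset.card

/-- The characteristic polynomial of a (finite) matroid:
`χ_M(t) = Σ_{S ⊆ E} (−1)^{|S|} t^{r(M) − r(S)}`. -/
noncomputable def matCharPoly [Fintype α] (M : Matroid α) : Polynomial ℤ :=
  ∑ S : Finset α, (-1 : ℤ[X]) ^ S.card * X ^ (mrank M univ - mrank M S)

section Aux

variable {M : Matroid α}

lemma card_le_mrank {T S : Finset α} (hT : M.Indep (T : Set α)) (hTS : T ⊆ S) :
    T.card ≤ mrank M S :=
  Finset.le_sup (by simp [Finset.mem_filter, Finset.mem_powerset, hTS, hT])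

lemma exists_indep_card_eq_mrank (M : Matroid α) (S : Finset α) :
    ∃ T, T ⊆ S ∧ M.Indep (T : Set α) ∧ T.card = mrank M S := by
  have hne : (S.powerset.filter fun T : Finset α => M.Indep (T : Set α)).Nonempty :=
    ⟨∅, by simp [M.empty_indep]⟩
  obtain ⟨T, hT, hcard⟩ := Finset.exists_mem_eq_sup _ hne Finset.card
  simp only [Finset.mem_filter, Finset.mem_powerset] at hT
  exact ⟨T, hT.1, hT.2, hcard.symm⟩

lemma mrank_mono {S S' : Finset α} (h : S ⊆ S') : mrank M S ≤ mrank M S' :=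
  Finset.sup_mono (Finset.filter_subset_filter _ (Finset.powerset_mono.2 h))

lemma mrank_eq_card_of_indep {S : Finset α} (hS : M.Indep (S : Set α)) :
    mrank M S = S.card := by
  refine le_antisymm (Finset.sup_le fun T hT => ?_) (card_le_mrank hS le_rfl)
  simp only [Finset.mem_filter, Finset.mem_powerset] at hT
  exact Finset.card_le_card hT.1

lemma basis_encard_eq {I J X : Set α} (hI : M.IsBasis I X) (hJ : M.IsBasis J X) :
    I.encard = J.encard :=
  hI.restrict_isBase.encard_eq_encard_of_isBase hJ.restrict_isBase

lemma mrank_insert_of_mem_closure [DecidableEq α] {u : α} {S : Finset α}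
    (hE : M.E = Set.univ) (hu : u ∈ M.closure (S : Set α)) :
    mrank M (insert u S) = mrank M S := by
  refine le_antisymm ?_ (mrank_mono (Finset.subset_insert u S))
  obtain ⟨T, hTsub, hTind, hTcard⟩ := exists_indep_card_eq_mrank M (insert u S)
  rw [← hTcard]
  have hSE : (S : Set α) ⊆ M.E := by rw [hE]; exact Set.subset_univ _
  obtain ⟨B, hB⟩ := M.exists_isBasis (S : Set α) hSE
  have hTcl : (T : Set α) ⊆ M.closure (S : Set α) := by
    have h1 : (T : Set α) ⊆ insert u (S : Set α) := by
      rw [← Finset.coe_insert]; exact_mod_cast hTsub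
    exact h1.trans (Set.insert_subset hu (M.subset_closure _ hSE))
  obtain ⟨J, hJ, hTJ⟩ := hTind.subset_isBasis_of_subset hTcl (M.closure_subset_ground _)
  have hBJ : B.encard = J.encard := basis_encard_eq hB.isBasis_closure_right hJ
  have hBfin : B.Finite := S.finite_toSet.subset hB.subset
  have hBsub : hBfin.toFinset ⊆ S := by
    rw [← Finset.coe_subset, hBfin.coe_toFinset]; exact hB.subset
  have hBind : M.Indep (hBfin.toFinset : Set α) := by
    rw [hBfin.coe_toFinset]; exact hB.indep
  have hcard : T.card ≤ hBfin.toFinset.card := by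
    have h1 : (T : Set α).encard ≤ J.encard := Set.encard_le_encard hTJ
    rw [← hBJ, hBfin.encard_eq_coe_toFinset_card,
      Set.encard_coe_eq_coe_finsetCard] at h1
    exact_mod_cast h1
  exact hcard.trans (card_le_mrank hBind hBsub)

lemma indep_of_not_dep (hE : M.E = Set.univ) {S : Finset α}
    (h : ¬ M.Dep (S : Set α)) : M.Indep (S : Set α) := by
  by_contra hi
  exact h ⟨hi, by rw [hE]; exact Set.subset_univ _⟩

lemma exists_circuit_subset (hE : M.E = Set.univ) {S : Finset α}
    (hS : M.Dep (S : Set α)) : ∃ C, C ⊆ S ∧ IsCircuit M C := by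
  classical
  have hne : (S.powerset.filter fun D : Finset α => M.Dep (D : Set α)).Nonempty :=
    ⟨S, by simp [hS]⟩
  obtain ⟨C, hC, hmin'⟩ := Finset.exists_minimal hne
  have hmin : ∀ D ∈ (S.powerset.filter fun D : Finset α => M.Dep (D : Set α)), ¬ D < C :=
    fun D hD hlt => hlt.ne (le_antisymm hlt.le (hmin' hD hlt.le))
  simp only [Finset.mem_filter, Finset.mem_powerset] at hC
  refine ⟨C, hC.1, hC.2, fun D hD => ?_⟩
  refine indep_of_not_dep hE fun hdep => hmin D ?_ hD
  exact Finset.mem_filter.2 ⟨Finset.mem_powerset.2 (hD.subset.trans hC.1), hdep⟩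

lemma circuit_nonempty {C : Finset α} (hC : IsCircuit M C) : C.Nonempty := by
  rcases C.eq_empty_or_nonempty with rfl | h
  · exact absurd M.empty_indep (by simpa using hC.1.not_indep)
  · exact h

end Aux

/-- The set of elements that are the maximum of a circuit whose associated broken
circuit is contained in `S`. -/
noncomputable def actSet [Fintype α] [LinearOrder α] (M : Matroid α) (S : Finset α) :
    Finset α :=
  univ.filter fun u => ∃ C : Finset α,
    IsCircuit M C ∧ u ∈ C ∧ (∀ v ∈ C, v ≤ u) ∧ C.erase u ⊆ S

section Act

variable [Fintype α] [LinearOrder α] {M : Matroid α}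

lemma mem_actSet_iff {S : Finset α} {u : α} :
    u ∈ actSet M S ↔ ∃ C : Finset α,
      IsCircuit M C ∧ u ∈ C ∧ (∀ v ∈ C, v ≤ u) ∧ C.erase u ⊆ S := by
  simp [actSet]

lemma not_nbc_iff_act_nonempty {S : Finset α} :
    ¬ NoBrokenCircuit M S ↔ (actSet M S).Nonempty := by
  constructor
  · intro h
    rw [NoBrokenCircuit] at h
    push_neg at h
    obtain ⟨B, ⟨C, hC, u, huC, hmax, rfl⟩, hBS⟩ := h
    exact ⟨u, mem_actSet_iff.2 ⟨C, hC, huC, hmax, hBS⟩⟩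
  · rintro ⟨u, hu⟩ hnbc
    obtain ⟨C, hC, huC, hmax, hsub⟩ := mem_actSet_iff.1 hu
    exact hnbc (C.erase u) ⟨C, hC, u, huC, hmax, rfl⟩ hsub

lemma act_mono {S S' : Finset α} (h : S ⊆ S') : actSet M S ⊆ actSet M S' := by
  intro u hu
  obtain ⟨C, h1, h2, h3, h4⟩ := mem_actSet_iff.1 hu
  exact mem_actSet_iff.2 ⟨C, h1, h2, h3, h4.trans h⟩

lemma not_nbc_of_dep (hE : M.E = Set.univ) {S : Finset α} (hS : M.Dep (S : Set α)) :
    ¬ NoBrokenCircuit M S := by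
  obtain ⟨C, hCS, hC⟩ := exists_circuit_subset hE hS
  have hne := circuit_nonempty hC
  intro h
  exact h (C.erase (C.max' hne))
    ⟨C, hC, C.max' hne, C.max'_mem hne, fun v hv => C.le_max' v hv, rfl⟩
    ((C.erase_subset _).trans hCS)

/-- Toggle the minimal active element. -/
noncomputable def tog (M : Matroid α) (S : Finset α) : Finset α :=
  if h : (actSet M S).Nonempty then
    if (actSet M S).min' h ∈ S then S.erase ((actSet M S).min' h)
    else insert ((actSet M S).min' h) S
  else S

lemma act_tog {S : Finset α} (h : (actSet M S).Nonempty) :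
    ∃ h' : (actSet M (tog M S)).Nonempty,
      (actSet M (tog M S)).min' h' = (actSet M S).min' h := by
  set u := (actSet M S).min' h with hu
  have humem : u ∈ actSet M S := (actSet M S).min'_mem h
  obtain ⟨C, hC, huC, hmax, hsub⟩ := mem_actSet_iff.1 humem
  have hsub' : C.erase u ⊆ S.erase u :=
    fun x hx => Finset.mem_erase.2 ⟨(Finset.mem_erase.1 hx).1, hsub hx⟩
  by_cases hmem : u ∈ S
  · -- tog M S = S.erase u
    have htog : tog M S = S.erase u := by rw [tog, dif_pos h, if_pos hmem]
    have huT : u ∈ actSet M (tog M S) := by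
      rw [htog]
      exact mem_actSet_iff.2 ⟨C, hC, huC, hmax, hsub'⟩
    refine ⟨⟨u, huT⟩, le_antisymm (Finset.min'_le _ u huT) ?_⟩
    refine Finset.le_min' _ _ _ fun v hv => ?_
    have : v ∈ actSet M S := act_mono (htog ▸ S.erase_subset u) hv
    exact Finset.min'_le _ v this
  · -- tog M S = insert u S
    have htog : tog M S = insert u S := by rw [tog, dif_pos h, if_neg hmem]
    have huT : u ∈ actSet M (tog M S) := by
      rw [htog]
      exact mem_actSet_iff.2 ⟨C, hC, huC, hmax, hsub.trans (Finset.subset_insert u S)⟩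
    refine ⟨⟨u, huT⟩, le_antisymm (Finset.min'_le _ u huT) ?_⟩
    refine Finset.le_min' _ _ _ fun v hv => ?_
    by_contra hlt
    push_neg at hlt
    obtain ⟨C', hC', hvC', hmax', hsub''⟩ := mem_actSet_iff.1 hv
    have huC' : u ∉ C' := fun hm => absurd (hmax' u hm) (not_le.2 hlt)
    have hCS : C'.erase v ⊆ S := by
      intro x hx
      have hx' := hsub'' hx
      rw [htog, Finset.mem_insert] at hx'
      rcases hx' with rfl | hx'
      · exact absurd (Finset.mem_erase.1 hx).2 (fun hxc => huC' hxc)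
      · exact hx'
    have : v ∈ actSet M S := mem_actSet_iff.2 ⟨C', hC', hvC', hmax', hCS⟩
    exact absurd (Finset.min'_le _ v this) (not_le.2 hlt)

lemma tog_tog {S : Finset α} (h : (actSet M S).Nonempty) : tog M (tog M S) = S := by
  obtain ⟨h', hmin⟩ := act_tog h
  set u := (actSet M S).min' h with hu
  by_cases hmem : u ∈ S
  · have htog : tog M S = S.erase u := by rw [tog, dif_pos h, if_pos hmem]
    have : u ∉ tog M S := htog ▸ Finset.notMem_erase u S
    rw [tog, dif_pos h', hmin, if_neg this, htog, Finset.insert_erase hmem]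
  · have htog : tog M S = insert u S := by rw [tog, dif_pos h, if_neg hmem]
    have : u ∈ tog M S := htog ▸ Finset.mem_insert_self u S
    rw [tog, dif_pos h', hmin, if_pos this, htog, Finset.erase_insert hmem]

lemma tog_mrank (hE : M.E = Set.univ) {S : Finset α} (h : (actSet M S).Nonempty) :
    mrank M (tog M S) = mrank M S := by
  set u := (actSet M S).min' h with hu
  have humem : u ∈ actSet M S := (actSet M S).min'_mem h
  obtain ⟨C, hC, huC, hmax, hsub⟩ := mem_actSet_iff.1 humem
  have hind : M.Indep ((C.erase u : Finset α) : Set α) :=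
    hC.2 _ (Finset.erase_ssubset huC)
  have hclo : u ∈ M.closure ((C.erase u : Finset α) : Set α) := by
    rw [hind.mem_closure_iff]
    left
    have hins : (insert u ((C.erase u : Finset α) : Set α)) = (C : Set α) := by
      rw [Finset.coe_erase, Set.insert_diff_singleton,
        Set.insert_eq_self.2 (by exact_mod_cast huC)]
    rw [hins]
    exact hC.1
  by_cases hmem : u ∈ S
  · have htog : tog M S = S.erase u := by rw [tog, dif_pos h, if_pos hmem]
    have hsub' : C.erase u ⊆ S.erase u :=
      fun x hx => Finset.mem_erase.2 ⟨(Finset.mem_erase.1 hx).1, hsub hx⟩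
    have hclo' : u ∈ M.closure ((S.erase u : Finset α) : Set α) :=
      M.closure_subset_closure (by exact_mod_cast hsub') hclo
    have hle : mrank M S ≤ mrank M (S.erase u) := by
      calc mrank M S ≤ mrank M (insert u (S.erase u)) :=
            mrank_mono (Finset.subset_insert_iff.2 le_rfl)
        _ = mrank M (S.erase u) := mrank_insert_of_mem_closure hE hclo'
    rw [htog]
    exact le_antisymm (mrank_mono (S.erase_subset u)) hle
  · have htog : tog M S = insert u S := by rw [tog, dif_pos h, if_neg hmem]
    have hclo' : u ∈ M.closure ((S : Finset α) : Set α) :=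
      M.closure_subset_closure (by exact_mod_cast hsub) hclo
    rw [htog, mrank_insert_of_mem_closure hE hclo']

lemma tog_card {S : Finset α} (h : (actSet M S).Nonempty) :
    ((-1 : ℤ)) ^ S.card + (-1 : ℤ) ^ (tog M S).card = 0 := by
  set u := (actSet M S).min' h with hu
  by_cases hmem : u ∈ S
  · have htog : tog M S = S.erase u := by rw [tog, dif_pos h, if_pos hmem]
    have hc : S.card = (tog M S).card + 1 := by
      rw [htog, Finset.card_erase_add_one hmem]
    rw [hc, pow_succ]
    ring
  · have htog : tog M S = insert u S := by rw [tog, dif_pos h, if_neg hmem]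
    have hc : (tog M S).card = S.card + 1 := by
      rw [htog, Finset.card_insert_of_notMem hmem]
    rw [hc, pow_succ]
    ring

lemma tog_ne {S : Finset α} (h : (actSet M S).Nonempty) : tog M S ≠ S := by
  intro heq
  have hc := tog_card h
  rw [heq] at hc
  have h2 : (2 : ℤ) * (-1) ^ S.card = 0 := by linarith
  have h3 : ((-1 : ℤ)) ^ S.card ≠ 0 := pow_ne_zero _ (by norm_num)
  rcases mul_eq_zero.1 h2 with h4 | h4
  · norm_num at h4
  · exact h3 h4

end Act

/-- Whitney's broken circuit theorem: for a matroid `M` with a linearly ordered ground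
set, the number of independent sets of size `i` containing no broken circuit equals
`(−1)^i` times the coefficient of `t^{r(M)−i}` in the characteristic polynomial of `M`. -/
theorem nbc_count_eq_charPoly_coeff [Fintype α] [LinearOrder α]
    (M : Matroid α) (hE : M.E = Set.univ) (i : ℕ) (hi : i ≤ mrank M univ) :
    ((univ.filter fun S : Finset α =>
        S.card = i ∧ M.Indep (S : Set α) ∧ NoBrokenCircuit M S).card : ℤ) =
      (-1 : ℤ) ^ i * (matCharPoly M).coeff (mrank M univ - i) := by
  classical
  set r := mrank M univ with hr
  have hco : (matCharPoly M).coeff (r - i) =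
      ∑ S ∈ univ.filter (fun S : Finset α => mrank M S = i), (-1 : ℤ) ^ S.card := by
    rw [matCharPoly, Polynomial.finset_sum_coeff, Finset.sum_filter]
    refine Finset.sum_congr rfl fun S _ => ?_
    rw [show ((-1 : ℤ[X])) = Polynomial.C (-1) by simp, ← Polynomial.C_pow,
      Polynomial.coeff_C_mul, Polynomial.coeff_X_pow]
    have h1 : mrank M S ≤ r := mrank_mono (Finset.subset_univ S)
    have h2 : (r - i = r - mrank M S) ↔ (mrank M S = i) := by omega
    by_cases hm : mrank M S = i <;> simp [hm, ← hr, h2]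
  have hsplit := Finset.sum_filter_add_sum_filter_not
      (univ.filter fun S : Finset α => mrank M S = i) (fun S => NoBrokenCircuit M S)
      (fun S => (-1 : ℤ) ^ S.card)
  have hzero : ∑ S ∈ (univ.filter fun S : Finset α => mrank M S = i).filter
      (fun S => ¬ NoBrokenCircuit M S), (-1 : ℤ) ^ S.card = 0 := by
    refine Finset.sum_involution (fun S _ => tog M S) ?_ ?_ ?_ ?_
    · intro S hS
      simp only [Finset.mem_filter, Finset.mem_univ, true_and] at hS
      exact tog_card (not_nbc_iff_act_nonempty.1 hS.2)
    · intro S hS _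
      simp only [Finset.mem_filter, Finset.mem_univ, true_and] at hS
      exact tog_ne (not_nbc_iff_act_nonempty.1 hS.2)
    · intro S hS
      simp only [Finset.mem_filter, Finset.mem_univ, true_and] at hS ⊢
      have hact := not_nbc_iff_act_nonempty.1 hS.2
      obtain ⟨h', _⟩ := act_tog hact
      exact ⟨(tog_mrank hE hact).trans hS.1, not_nbc_iff_act_nonempty.2 h'⟩
    · intro S hS
      simp only [Finset.mem_filter, Finset.mem_univ, true_and] at hS
      exact tog_tog (not_nbc_iff_act_nonempty.1 hS.2)
  have hset : (univ.filter fun S : Finset α => mrank M S = i).filter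
        (fun S => NoBrokenCircuit M S) =
      univ.filter (fun S : Finset α =>
        S.card = i ∧ M.Indep (S : Set α) ∧ NoBrokenCircuit M S) := by
    rw [Finset.filter_filter]
    ext S
    simp only [Finset.mem_filter, Finset.mem_univ, true_and]
    constructor
    · rintro ⟨hm, hnbc⟩
      have hind : M.Indep (S : Set α) := by
        by_contra hdep
        exact not_nbc_of_dep hE ⟨hdep, by rw [hE]; exact Set.subset_univ _⟩ hnbc
      exact ⟨by rw [← mrank_eq_card_of_indep hind, hm], hind, hnbc⟩
    · rintro ⟨hc, hind, hnbc⟩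
      exact ⟨by rw [mrank_eq_card_of_indep hind, hc], hnbc⟩
  have hnbcsum : ∑ S ∈ univ.filter (fun S : Finset α =>
        S.card = i ∧ M.Indep (S : Set α) ∧ NoBrokenCircuit M S), (-1 : ℤ) ^ S.card =
      ((univ.filter (fun S : Finset α =>
        S.card = i ∧ M.Indep (S : Set α) ∧ NoBrokenCircuit M S)).card : ℤ) * (-1) ^ i := by
    have hcg : ∀ S ∈ univ.filter (fun S : Finset α =>
        S.card = i ∧ M.Indep (S : Set α) ∧ NoBrokenCircuit M S),
        ((-1 : ℤ) ^ S.card) = (-1 : ℤ) ^ i := fun S hS => by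
      simp only [Finset.mem_filter] at hS
      rw [hS.2.1]
    rw [Finset.sum_congr rfl hcg, Finset.sum_const, nsmul_eq_mul]
  have hkey : (matCharPoly M).coeff (r - i) =
      ((univ.filter (fun S : Finset α =>
        S.card = i ∧ M.Indep (S : Set α) ∧ NoBrokenCircuit M S)).card : ℤ) * (-1) ^ i := by
    rw [hco, ← hsplit, hzero, add_zero, hset, hnbcsum]
  rw [hkey, mul_comm ((-1 : ℤ) ^ i), mul_assoc, ← mul_pow]
  norm_num
end

section
/- Let A = {H₁,...,H_N} be a central hyperplane arrangement in C^r with linear forms h_i, let R₁,...,R_N be positive reals, and suppose S ⊆ A contains a broken circuit with respect to the order H₁ < ... < H_N, where the R_i grow fast enough that R_{i_k}·(sum of |c_j|) < R_i for every circuit relation h_i = Σ_j c_j h_{i_j} with all i_j < i. Then the stratum P_A^S = {x ∈ C^r : |h_i(x)| > R_i for H_i ∈ A\S, |h_i(x)| = R_i for H_i ∈ S} is empty. -/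
open Finset

/-- Independence in the linear matroid of the forms `h`. -/
def LinIndep {N : ℕ} {V : Type*} [AddCommGroup V] [Module ℂ V]
    (h : Fin N → V) (S : Finset (Fin N)) : Prop :=
  LinearIndependent ℂ (fun x : S => h x)

/-- A circuit of the linear matroid of `h`: a minimal dependent set. -/
def LinCircuit {N : ℕ} {V : Type*} [AddCommGroup V] [Module ℂ V]
    (h : Fin N → V) (C : Finset (Fin N)) : Prop :=
  ¬ LinIndep h C ∧ ∀ D : Finset (Fin N), D ⊂ C → LinIndep h D

lemma circuit_coeffs {N : ℕ} {V : Type*} [AddCommGroup V] [Module ℂ V]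
    (h : Fin N → V) (C : Finset (Fin N)) (hC : LinCircuit h C) :
    ∃ a : Fin N → ℂ, (∀ j ∈ C, a j ≠ 0) ∧ ∑ j ∈ C, a j • h j = 0 := by
  obtain ⟨hdep, hmin⟩ := hC
  rw [LinIndep, Fintype.not_linearIndependent_iff] at hdep
  obtain ⟨g, hg0, i0, hi0⟩ := hdep
  set a : Fin N → ℂ := fun j => if hj : j ∈ C then g ⟨j, hj⟩ else 0 with ha
  have hsum : ∑ j ∈ C, a j • h j = 0 := by
    rw [← Finset.sum_coe_sort C (fun j => a j • h j)] at *
    rw [← hg0]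
    refine Finset.sum_congr rfl fun x _ => ?_
    simp [ha, x.2]
  refine ⟨a, ?_, hsum⟩
  intro j hj haj
  have hsub : C.erase j ⊂ C := Finset.erase_ssubset hj
  have hind := hmin _ hsub
  rw [LinIndep, Fintype.linearIndependent_iff] at hind
  have hsum' : ∑ x : (C.erase j : Finset (Fin N)), a x • h (x : Fin N) = 0 := by
    rw [Finset.sum_coe_sort (C.erase j) (fun k => a k • h k)]
    have := Finset.add_sum_erase C (fun k => a k • h k) hj
    rw [← this] at hsum
    simpa [haj] using hsum
  have hall := hind (fun x => a x) hsum'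
  apply hi0
  have hza : a i0 = 0 := by
    by_cases hij : (i0 : Fin N) = j
    · rw [hij]; exact haj
    · exact hall ⟨i0, Finset.mem_erase.2 ⟨hij, i0.2⟩⟩
  simpa [ha, i0.2] using hza

/-- If the radii `R₁ ≪ ⋯ ≪ R_N` grow fast enough with respect to the circuit
relations of the arrangement of the forms `h₁,…,h_N` and `S` contains a broken
circuit (with respect to the order `H₁ < ⋯ < H_N`), then the stratum
`P_A^S = {x : |h_i(x)| > R_i for i ∉ S, |h_i(x)| = R_i for i ∈ S}` is empty. -/
theorem stratum_empty_of_brokenCircuit (N r : ℕ)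
    (h : Fin N → ((Fin r → ℂ) →ₗ[ℂ] ℂ)) (R : Fin N → ℝ)
    (hpos : ∀ i, 0 < R i) (hmono : Monotone R)
    (hgrow : ∀ (i : Fin N) (T : Finset (Fin N)) (c : Fin N → ℂ) (hT : T.Nonempty),
      (∀ j ∈ T, j < i) → (∀ j ∈ T, c j ≠ 0) → h i = ∑ j ∈ T, c j • h j →
        (∑ j ∈ T, ‖c j‖) * R (T.max' hT) < R i)
    (S : Finset (Fin N))
    (hbc : ∃ C : Finset (Fin N), LinCircuit h C ∧
      ∃ hC : C.Nonempty, C.erase (C.max' hC) ⊆ S) :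
    ¬ ∃ x : Fin r → ℂ,
        (∀ i ∉ S, R i < ‖h i x‖) ∧ (∀ i ∈ S, ‖h i x‖ = R i) := by
  rintro ⟨x, hout, hin⟩
  obtain ⟨C, hcirc, hCne, hbcS⟩ := hbc
  obtain ⟨a, hane, hsum⟩ := circuit_coeffs h C hcirc
  set m := C.max' hCne with hm
  have hmC : m ∈ C := C.max'_mem hCne
  have ham := hane m hmC
  have hRm : R m ≤ ‖h m x‖ := by
    by_cases hmS : m ∈ S
    · exact (hin m hmS).ge
    · exact (hout m hmS).le
  set T := C.erase m with hT
  have hsplit : a m • h m + ∑ j ∈ T, a j • h j = 0 := by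
    rw [hT, Finset.add_sum_erase C (fun j => a j • h j) hmC]; exact hsum
  rcases T.eq_empty_or_nonempty with hTe | hTne
  · have hz : a m • h m = 0 := by simpa [hTe] using hsplit
    have hhm : h m = 0 := by
      rcases smul_eq_zero.1 hz with h1 | h1
      · exact absurd h1 ham
      · exact h1
    rw [hhm] at hRm
    simp at hRm
    exact absurd hRm (not_le.2 (hpos m))
  · set c : Fin N → ℂ := fun j => -(a j) / a m with hc
    have hrel : h m = ∑ j ∈ T, c j • h j := by
      have h1 : a m • h m = -∑ j ∈ T, a j • h j := eq_neg_of_add_eq_zero_left hsplit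
      calc h m = (a m)⁻¹ • (a m • h m) := by
              rw [smul_smul, inv_mul_cancel₀ ham, one_smul]
        _ = (a m)⁻¹ • (-∑ j ∈ T, a j • h j) := by rw [h1]
        _ = ∑ j ∈ T, c j • h j := by
            rw [← Finset.sum_neg_distrib, Finset.smul_sum]
            refine Finset.sum_congr rfl fun j _ => ?_
            rw [hc, ← neg_smul, smul_smul]
            congr 1
            field_simp

    have hlt : ∀ j ∈ T, j < m := fun j hj =>
      lt_of_le_of_ne (C.le_max' j (Finset.mem_of_mem_erase hj)) (Finset.ne_of_mem_erase hj)
    have hcne : ∀ j ∈ T, c j ≠ 0 := by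
      intro j hj
      have := hane j (Finset.mem_of_mem_erase hj)
      simp [hc, this, ham]
    have key := hgrow m T c hTne hlt hcne hrel
    have habs : ‖h m x‖ ≤ (∑ j ∈ T, ‖c j‖) * R (T.max' hTne) := by
      have hx : h m x = ∑ j ∈ T, c j * h j x := by
        rw [hrel]; simp
      rw [hx, Finset.sum_mul]
      refine le_trans (norm_sum_le _ _) (Finset.sum_le_sum fun j hj => ?_)
      rw [norm_mul, hin j (hbcS hj)]
      exact mul_le_mul_of_nonneg_left (hmono (T.le_max' j hj)) (norm_nonneg _)
    linarith
end

section
/- Let h₁,...,h_N be nonzero linear forms on C^r with the dependence property that whenever h_i = Σ_j c_j h_{i_j} with i_1 < ... < i_k < i, then (Σ_j |c_j|)·R_{i_k} < R_i for positive reals R₁ ≪ ... ≪ R_N. If S = {H_{j_1},...,H_{j_r}} is a basis of the arrangement containing no broken circuit, and x ∈ C^r satisfies |h_{j_l}(x)| = R_{j_l} for all l, then |h_i(x)| > R_i for every hyperplane H_i ∉ S. -/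
open Finset

/-- A base of the linear matroid of `h`: a maximal independent set. -/
def LinBase {N : ℕ} {V : Type*} [AddCommGroup V] [Module ℂ V]
    (h : Fin N → V) (S : Finset (Fin N)) : Prop :=
  LinIndep h S ∧ ∀ T : Finset (Fin N), S ⊆ T → LinIndep h T → T = S

/-- `S` contains no broken circuit (with respect to the index order). -/
def LinNoBrokenCircuit {N : ℕ} {V : Type*} [AddCommGroup V] [Module ℂ V]
    (h : Fin N → V) (S : Finset (Fin N)) : Prop :=
  ∀ C : Finset (Fin N), LinCircuit h C → ∀ hC : C.Nonempty, ¬ C.erase (C.max' hC) ⊆ S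

lemma linIndep_mono {N : ℕ} {V : Type*} [AddCommGroup V] [Module ℂ V]
    {h : Fin N → V} {D S : Finset (Fin N)} (hDS : D ⊆ S) (hS : LinIndep h S) :
    LinIndep h D := by
  have := hS.comp (fun x : D => (⟨x.1, hDS x.2⟩ : S))
    (by intro a b hab; exact Subtype.ext (congrArg Subtype.val hab : _))
  exact this

/-- If `S` is a basis of the arrangement of the forms `h₁,…,h_N` containing no broken
circuit (with respect to `H₁ < ⋯ < H_N`), the radii `R₁ ≪ ⋯ ≪ R_N` grow fast enough
with respect to the circuit relations, and `x` satisfies `|h_j(x)| = R_j` for all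
`j ∈ S`, then `|h_i(x)| > R_i` for every hyperplane `H_i ∉ S`. -/
theorem nbc_base_stratum_strict (N r : ℕ)
    (h : Fin N → ((Fin r → ℂ) →ₗ[ℂ] ℂ))
    (hspan : Submodule.span ℂ (Set.range h) = ⊤)
    (R : Fin N → ℝ) (hpos : ∀ i, 0 < R i) (hmono : Monotone R)
    (hgrow : ∀ (i : Fin N) (T : Finset (Fin N)) (c : Fin N → ℂ) (hT : T.Nonempty),
      (∀ j ∈ T, j < i) → (∀ j ∈ T, c j ≠ 0) → h i = ∑ j ∈ T, c j • h j →
        (∑ j ∈ T, ‖c j‖) * R (T.max' hT) < R i)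
    (S : Finset (Fin N)) (hbase : LinBase h S) (hnbc : LinNoBrokenCircuit h S)
    (x : Fin r → ℂ) (hx : ∀ j ∈ S, ‖h j x‖ = R j) :
    ∀ i ∉ S, R i < ‖h i x‖ := by
  classical
  intro i hiS
  -- `insert i S` is dependent
  have hdep : ¬ LinIndep h (insert i S) := by
    intro hind
    have := hbase.2 (insert i S) (subset_insert i S) hind
    exact hiS (this ▸ mem_insert_self i S)
  -- choose a minimal dependent subset C of insert i S
  have hPne : insert i S ∈ (insert i S).powerset.filter (fun D => ¬ LinIndep h D) := by
    simp [hdep]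
  obtain ⟨C, hCmem, hCmin⟩ :=
    (show ∃ C ∈ (insert i S).powerset.filter (fun D => ¬ LinIndep h D),
        ∀ D ∈ (insert i S).powerset.filter (fun D => ¬ LinIndep h D), ¬ D < C from by
      obtain ⟨C, hC⟩ := exists_minimal_of_wellFoundedLT
        (· ∈ (insert i S).powerset.filter (fun D => ¬ LinIndep h D)) ⟨_, hPne⟩
      exact ⟨C, hC.1, fun D hD hlt => hlt.not_ge (hC.2 hD hlt.le)⟩)
  rw [mem_filter, mem_powerset] at hCmem
  obtain ⟨hCsub, hCdep⟩ := hCmem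
  have hcirc : LinCircuit h C := by
    refine ⟨hCdep, fun D hD => ?_⟩
    by_contra hDdep
    exact hCmin D (mem_filter.mpr ⟨mem_powerset.mpr (hD.subset.trans hCsub), hDdep⟩) hD
  have hiC : i ∈ C := by
    by_contra hiC
    have hCS : C ⊆ S := fun j hj => by
      rcases mem_insert.mp (hCsub hj) with rfl | hjS
      · exact absurd hj hiC
      · exact hjS
    exact hCdep (linIndep_mono hCS hbase.1)
  have hCne : C.Nonempty := ⟨i, hiC⟩
  set m := C.max' hCne with hm_def
  have hmC : m ∈ C := C.max'_mem hCne
  have hmi : m ≠ i := by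
    intro hmi
    apply hnbc C hcirc hCne
    intro j hj
    rw [mem_erase] at hj
    rcases mem_insert.mp (hCsub hj.2) with rfl | hjS
    · exact absurd (hm_def.symm.trans hmi).symm hj.1
    · exact hjS
  have him : i < m := lt_of_le_of_ne (C.le_max' i hiC) (fun e => hmi e.symm)
  have hmS : m ∈ S := by
    rcases mem_insert.mp (hCsub hmC) with e | hjS
    · exact absurd e hmi
    · exact hjS
  -- a nontrivial relation supported on C
  have hCdep' := hcirc.1
  rw [LinIndep, Fintype.not_linearIndependent_iff] at hCdep'
  obtain ⟨g, hgsum, j₀, hj₀⟩ := hCdep'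
  set c : Fin N → ℂ := fun j => if hj : j ∈ C then g ⟨j, hj⟩ else 0 with hc
  have hcsum : ∑ j ∈ C, c j • h j = 0 := by
    rw [← Finset.sum_attach C (fun j => c j • h j)]
    rw [← hgsum, Finset.univ_eq_attach]
    refine Finset.sum_congr rfl fun j _ => ?_
    simp [hc]
  -- every coefficient is nonzero
  have hcne : ∀ j ∈ C, c j ≠ 0 := by
    intro j hj hcj
    have herI : LinIndep h (C.erase j) := hcirc.2 _ (erase_ssubset hj)
    rw [LinIndep, Fintype.linearIndependent_iff] at herI
    have hsum' : ∑ k ∈ C.erase j, c k • h k = 0 := by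
      rw [Finset.sum_erase _ (by rw [hcj, zero_smul])]
      exact hcsum
    have hz := herI (fun k : (C.erase j : Finset (Fin N)) => c k) (by
      rw [Finset.univ_eq_attach, Finset.sum_attach (C.erase j) (fun k => c k • h k)]
      exact hsum')
    have key : ∀ k ∈ C, c k = 0 := by
      intro k hk
      by_cases hkj : k = j
      · rw [hkj]; exact hcj
      · exact hz ⟨k, Finset.mem_erase.mpr ⟨hkj, hk⟩⟩
    apply hj₀
    have := key j₀.1 j₀.2
    simpa [hc] using this
  have hcm : c m ≠ 0 := hcne m hmC
  -- solve for h m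
  set T := C.erase m with hT_def
  set d : Fin N → ℂ := fun j => -(c j / c m) with hd
  have hiT : i ∈ T := mem_erase.mpr ⟨fun e => hmi e.symm, hiC⟩
  have hTne : T.Nonempty := ⟨i, hiT⟩
  have hsum2 : ∑ j ∈ T, c j • h j = -(c m • h m) := by
    have h1 : c m • h m + ∑ j ∈ T, c j • h j = 0 := by
      have he := Finset.add_sum_erase C (fun j => c j • h j) hmC
      rw [hT_def, he]; exact hcsum
    exact eq_neg_of_add_eq_zero_right h1
  have hrel : h m = ∑ j ∈ T, d j • h j := by
    have heq : ∑ j ∈ T, d j • h j = (-(c m)⁻¹) • ∑ j ∈ T, c j • h j := by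
      rw [Finset.smul_sum]
      refine Finset.sum_congr rfl fun j _ => ?_
      rw [smul_smul]
      congr 1
      simp only [hd]; rw [neg_mul, div_eq_inv_mul]
    rw [heq, hsum2, smul_neg, neg_smul, neg_neg, smul_smul, inv_mul_cancel₀ hcm, one_smul]
  have hdne : ∀ j ∈ T, d j ≠ 0 := fun j hj =>
    neg_ne_zero.mpr (div_ne_zero (hcne j (mem_of_mem_erase hj)) hcm)
  have hlt : ∀ j ∈ T, j < m := fun j hj =>
    lt_of_le_of_ne (C.le_max' j (mem_of_mem_erase hj)) (mem_erase.mp hj).1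
  have key := hgrow m T d hTne hlt hdne hrel
  -- estimates
  have hRmax : ∀ j ∈ T, R j ≤ R (T.max' hTne) := fun j hj => hmono (T.le_max' j hj)
  have S1 : ∑ j ∈ T, ‖d j‖ * R j ≤
      (∑ j ∈ T, ‖d j‖) * R (T.max' hTne) := by
    rw [Finset.sum_mul]
    exact Finset.sum_le_sum fun j hj =>
      mul_le_mul_of_nonneg_left (hRmax j hj) (norm_nonneg _)
  have E2 : h m x = ∑ j ∈ T, d j * h j x := by
    rw [hrel]
    simp [LinearMap.sum_apply]
  have E3 : R m ≤ ∑ j ∈ T, ‖d j‖ * ‖h j x‖ := by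
    rw [← hx m hmS, E2]
    refine le_trans (norm_sum_le _ _) (le_of_eq ?_)
    exact Finset.sum_congr rfl fun j _ => norm_mul _ _
  have hTS : ∀ j ∈ T.erase i, j ∈ S := by
    intro j hj
    rw [mem_erase] at hj
    rcases mem_insert.mp (hCsub (mem_of_mem_erase hj.2)) with rfl | hjS
    · exact absurd rfl hj.1
    · exact hjS
  have split1 : ∑ j ∈ T, ‖d j‖ * ‖h j x‖
      = ‖d i‖ * ‖h i x‖
        + ∑ j ∈ T.erase i, ‖d j‖ * R j := by
    rw [← Finset.add_sum_erase _ _ hiT]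
    congr 1
    exact Finset.sum_congr rfl fun j hj => by rw [hx j (hTS j hj)]
  have split2 : ∑ j ∈ T, ‖d j‖ * R j
      = ‖d i‖ * R i + ∑ j ∈ T.erase i, ‖d j‖ * R j := by
    rw [← Finset.add_sum_erase _ _ hiT]
  have main : ‖d i‖ * R i < ‖d i‖ * ‖h i x‖ := by
    have h1 : ‖d i‖ * R i + ∑ j ∈ T.erase i, ‖d j‖ * R j < R m :=
      split2 ▸ lt_of_le_of_lt S1 key
    have h2 : R m ≤ ‖d i‖ * ‖h i x‖
        + ∑ j ∈ T.erase i, ‖d j‖ * R j := split1 ▸ E3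
    linarith
  have hdi : 0 < ‖d i‖ := by
    rw [norm_pos_iff]
    exact hdne i hiT
  exact lt_of_mul_lt_mul_left main (le_of_lt hdi)
end

section
/- Let A be a central hyperplane arrangement in C^r given by linear forms h_i with positive reals R_i. The map f(x) = max(1, max_i R_i/|h_i(x)|) · x is a deformation retraction from the complement C_A = C^r \ ∪H_i onto P_A = {x ∈ C^r : |h_i(x)| ≥ R_i for all i}; in particular it is continuous, restricts to the identity on P_A, and is homotopic to the identity of C_A. -/
/-- The retraction map `f(x) = max(1, max_i R_i/|h_i(x)|) · x`. -/
noncomputable def retractMap (N r : ℕ) (h : Fin N → ((Fin r → ℂ) →ₗ[ℂ] ℂ))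
    (R : Fin N → ℝ) (x : Fin r → ℂ) : Fin r → ℂ :=
  (max 1 (⨆ i, R i / ‖h i x‖)) • x

lemma continuousOn_finset_sup'_aux {α ι : Type*} [TopologicalSpace α] (t : Set α)
    (s : Finset ι) (hne : s.Nonempty) (F : ι → α → ℝ)
    (hF : ∀ i ∈ s, ContinuousOn (F i) t) :
    ContinuousOn (fun x => s.sup' hne (fun i => F i x)) t := by
  induction hne using Finset.Nonempty.cons_induction with
  | singleton a => simpa using hF a (by simp)
  | cons a s ha hne ih =>
    simp only [Finset.sup'_cons, hne]
    exact ContinuousOn.sup (hF a (by simp))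
      (ih (fun i hi => hF i (Finset.mem_cons_of_mem hi)))

/-- The map `f(x) = max(1, max_i R_i/|h_i(x)|) · x` is a deformation retraction from
the complement `C_A = ℂ^r \ ∪ H_i` of a central arrangement onto the space of branched
polymers `P_A = {x : |h_i(x)| ≥ R_i for all i}`: it is continuous on `C_A`, maps `C_A`
into `P_A`, restricts to the identity on `P_A`, and is homotopic to the identity of
`C_A`. -/
theorem retractMap_deformation_retraction (N r : ℕ)
    (h : Fin N → ((Fin r → ℂ) →ₗ[ℂ] ℂ)) (R : Fin N → ℝ) (hpos : ∀ i, 0 < R i)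
    (CA PA : Set (Fin r → ℂ))
    (hCA : CA = {x | ∀ i, h i x ≠ 0})
    (hPA : PA = {x | ∀ i, R i ≤ ‖h i x‖}) :
    ContinuousOn (retractMap N r h R) CA ∧
    Set.MapsTo (retractMap N r h R) CA PA ∧
    Set.EqOn (retractMap N r h R) id PA ∧
    ∃ g : C(CA, CA), (∀ x : CA, (g x : Fin r → ℂ) = retractMap N r h R x) ∧
      Nonempty (g.Homotopy (ContinuousMap.id CA)) := by
  subst hCA; subst hPA
  set c : (Fin r → ℂ) → ℝ := fun x => max 1 (⨆ i, R i / ‖h i x‖) with hcdef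
  have hc1 : ∀ x, 1 ≤ c x := fun x => le_max_left _ _
  have hcpos : ∀ x, 0 < c x := fun x => lt_of_lt_of_le one_pos (hc1 x)
  have hfx : ∀ x, retractMap N r h R x = c x • x := fun x => rfl
  have habs : ∀ (s : ℝ) (i : Fin N) (x : Fin r → ℂ),
      ‖h i (s • x)‖ = |s| * ‖h i x‖ := by
    intro s i x
    rw [LinearMap.map_smul_of_tower, Complex.real_smul, norm_mul, Complex.norm_real, Real.norm_eq_abs]
  have hbdd : ∀ x, BddAbove (Set.range fun i => R i / ‖h i x‖) :=
    fun x => (Set.finite_range _).bddAbove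
  have hle : ∀ (x : Fin r → ℂ) (i : Fin N), R i / ‖h i x‖ ≤ c x :=
    fun x i => le_trans (le_ciSup (hbdd x) i) (le_max_right _ _)
  -- continuity of c on CA
  have hcont : ContinuousOn c {x | ∀ i, h i x ≠ 0} := by
    apply ContinuousOn.sup continuousOn_const
    rcases isEmpty_or_nonempty (Fin N) with hN | hN
    · exact (continuousOn_const (c := (0:ℝ))).congr
        (fun x _ => by simp [ciSup_of_empty, Real.sSup_empty])
    · have heq : (fun x => ⨆ i, R i / ‖h i x‖) =
          fun x => Finset.univ.sup' Finset.univ_nonempty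
            (fun i => R i / ‖h i x‖) := by
        funext x; rw [Finset.sup'_univ_eq_ciSup]
      rw [heq]
      apply continuousOn_finset_sup'_aux
      intro i _
      apply ContinuousOn.div continuousOn_const
      · exact (continuous_norm.comp (h i).continuous_of_finiteDimensional).continuousOn
      · intro x hx
        exact (norm_pos_iff.mpr (hx i)).ne'
  have hmaps : Set.MapsTo (retractMap N r h R) {x | ∀ i, h i x ≠ 0}
      {x | ∀ i, R i ≤ ‖h i x‖} := by
    intro x hx i
    have hxpos : 0 < ‖h i x‖ := norm_pos_iff.mpr (hx i)
    rw [hfx, habs, abs_of_pos (hcpos x)]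
    calc R i = (R i / ‖h i x‖) * ‖h i x‖ := by field_simp
    _ ≤ c x * ‖h i x‖ :=
        mul_le_mul_of_nonneg_right (hle x i) hxpos.le
  have hPAsub : {x : Fin r → ℂ | ∀ i, R i ≤ ‖h i x‖} ⊆
      {x | ∀ i, h i x ≠ 0} := by
    intro x hx i hzero
    have := hx i
    rw [hzero] at this
    simpa using lt_of_lt_of_le (hpos i) this
  have heqon : Set.EqOn (retractMap N r h R) id
      {x : Fin r → ℂ | ∀ i, R i ≤ ‖h i x‖} := by
    intro x hx
    have hsle : (⨆ i, R i / ‖h i x‖) ≤ 1 := by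
      apply Real.iSup_le _ zero_le_one
      intro i
      have hxpos : 0 < ‖h i x‖ := lt_of_lt_of_le (hpos i) (hx i)
      exact div_le_one_of_le₀ (hx i) hxpos.le
    have hc1' : c x = 1 := max_eq_left hsle
    simp [hfx, hc1']
  have hmem : ∀ (s : ℝ), s ≠ 0 → ∀ x, (∀ i, h i x ≠ 0) →
      ∀ i, h i (s • x) ≠ 0 := by
    intro s hs x hx i
    rw [LinearMap.map_smul_of_tower]
    exact smul_ne_zero hs (hx i)
  have hcrest : Continuous (fun x : {x : Fin r → ℂ | ∀ i, h i x ≠ 0} => c ↑x) :=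
    hcont.restrict
  have hfcont : ContinuousOn (retractMap N r h R) {x | ∀ i, h i x ≠ 0} := by
    have : retractMap N r h R = fun x => c x • x := rfl
    rw [this]
    exact hcont.smul continuousOn_id
  refine ⟨hfcont, hmaps, heqon, ?_⟩
  refine ⟨⟨fun x => ⟨retractMap N r h R ↑x, hPAsub (hmaps x.2)⟩, ?_⟩, fun x => rfl, ?_⟩
  · exact (hfcont.restrict.codRestrict _)
  · refine ⟨{ toFun := fun p => ⟨((1 - (p.1 : ℝ)) * c ↑p.2 + (p.1 : ℝ)) • (p.2 : Fin r → ℂ), ?_⟩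
              continuous_toFun := ?_
              map_zero_left := ?_
              map_one_left := ?_ }⟩
    · intro i
      apply hmem _ ?_ _ p.2.2
      have ht0 : (0:ℝ) ≤ (p.1 : ℝ) := p.1.2.1
      have ht1 : (p.1 : ℝ) ≤ 1 := p.1.2.2
      have : (1:ℝ) ≤ (1 - (p.1 : ℝ)) * c ↑p.2 + (p.1 : ℝ) := by
        nlinarith [hc1 (↑p.2 : Fin r → ℂ)]
      linarith
    · apply Continuous.subtype_mk
      apply Continuous.fun_smul
      · exact ((continuous_const.sub (continuous_subtype_val.comp continuous_fst)).mul
          (hcrest.comp continuous_snd)).add (continuous_subtype_val.comp continuous_fst)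
      · exact continuous_subtype_val.comp continuous_snd
    · intro x
      ext1
      simp [hfx]
    · intro x
      ext1
      simp
end

section
/- The spaces P_A and C_A are homotopy equivalent, where C_A is the complement of a central hyperplane arrangement A in C^r and P_A is the set of points at |h_i|-distance at least R_i from each hyperplane; in particular H*(P_A, Z) ≅ H*(C_A, Z). -/
/-- The space of branched polymers `P_A` of a central hyperplane arrangement
`A = {ker h₁, …, ker h_N}` in `ℂ^r` is homotopy equivalent to the complement
`C_A = ℂ^r \ ∪ H_i`; in particular `H^*(P_A, ℤ) ≅ H^*(C_A, ℤ)`. -/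
theorem polymers_homotopyEquiv_complement (N r : ℕ)
    (h : Fin N → ((Fin r → ℂ) →ₗ[ℂ] ℂ)) (hne : ∀ i, h i ≠ 0)
    (R : Fin N → ℝ) (hpos : ∀ i, 0 < R i)
    (CA PA : Set (Fin r → ℂ))
    (hCA : CA = {x | ∀ i, h i x ≠ 0})
    (hPA : PA = {x | ∀ i, R i ≤ ‖h i x‖}) :
    Nonempty (ContinuousMap.HomotopyEquiv PA CA) := by
  subst hCA hPA
  have hc : ∀ i, Continuous (h i) := fun i => (h i).continuous_of_finiteDimensional
  set s : (Fin r → ℂ) → ℝ :=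
    fun x => 1 + ∑ i, max 0 (R i / ‖h i x‖ - 1) with hs
  have hsum_nonneg : ∀ x, 0 ≤ ∑ i, max 0 (R i / ‖h i x‖ - 1) :=
    fun x => Finset.sum_nonneg fun i _ => le_max_left _ _
  have hs1 : ∀ x, 1 ≤ s x := by
    intro x
    have := hsum_nonneg x
    simp only [hs]
    linarith
  -- P_A ⊆ C_A
  have hPC : ∀ x : Fin r → ℂ, (∀ i, R i ≤ ‖h i x‖) → ∀ i, h i x ≠ 0 := by
    intro x hx i
    have h1 : (0:ℝ) < ‖h i x‖ := lt_of_lt_of_le (hpos i) (hx i)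
    intro h0
    rw [h0] at h1
    simp at h1
  -- key inequality : R i ≤ s x * |h i x| on C_A
  have hskey : ∀ x : Fin r → ℂ, (∀ i, h i x ≠ 0) →
      ∀ i, R i ≤ s x * ‖h i x‖ := by
    intro x hx i
    have habs : 0 < ‖h i x‖ := by
      simpa [norm_pos_iff] using hx i
    rcases le_or_gt (R i / ‖h i x‖) 1 with hle | hlt
    · have h2 : R i ≤ ‖h i x‖ := (div_le_one habs).mp hle
      nlinarith [hs1 x]
    · have hterm : R i / ‖h i x‖ - 1 ≤
          ∑ j, max 0 (R j / ‖h j x‖ - 1) := by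
        have h4 : max 0 (R i / ‖h i x‖ - 1) ≤
            ∑ j, max 0 (R j / ‖h j x‖ - 1) :=
          Finset.single_le_sum
            (f := fun j => max 0 (R j / ‖h j x‖ - 1))
            (fun j _ => le_max_left _ _) (Finset.mem_univ i)
        exact le_trans (le_max_right _ _) h4
      have h3 : R i / ‖h i x‖ ≤ s x := by
        simp only [hs]; linarith
      calc R i = (R i / ‖h i x‖) * ‖h i x‖ := by field_simp
        _ ≤ s x * ‖h i x‖ := by nlinarith
  -- s = 1 on P_A
  have hsPA : ∀ x : Fin r → ℂ, (∀ i, R i ≤ ‖h i x‖) → s x = 1 := by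
    intro x hx
    have hz : ∀ i ∈ Finset.univ, max 0 (R i / ‖h i x‖ - 1) = 0 := by
      intro i _
      have habs : 0 < ‖h i x‖ := lt_of_lt_of_le (hpos i) (hx i)
      have hle : R i / ‖h i x‖ ≤ 1 := (div_le_one habs).mpr (hx i)
      have : R i / ‖h i x‖ - 1 ≤ 0 := by linarith
      exact max_eq_left this
    simp only [hs, Finset.sum_congr rfl hz, Finset.sum_const_zero, add_zero]
  -- continuity of s on C_A
  have hscont : Continuous fun x : {x : Fin r → ℂ | ∀ i, h i x ≠ 0} => s x.val := by
    apply continuous_const.add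
    apply continuous_finset_sum
    intro i _
    apply continuous_const.max
    apply Continuous.sub _ continuous_const
    exact continuous_const.div
      (continuous_norm.comp ((hc i).comp continuous_subtype_val))
      (fun x => by simpa using x.2 i)
  -- the inclusion P_A → C_A
  set incl : C({x : Fin r → ℂ | ∀ i, R i ≤ ‖h i x‖},
      {x : Fin r → ℂ | ∀ i, h i x ≠ 0}) :=
    ⟨fun x => ⟨x.val, hPC x.val x.2⟩, Continuous.subtype_mk continuous_subtype_val _⟩
    with hincl
  -- the retraction C_A → P_A
  have hmem : ∀ x : {x : Fin r → ℂ | ∀ i, h i x ≠ 0},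
      ((s x.val : ℂ) • x.val) ∈ {x : Fin r → ℂ | ∀ i, R i ≤ ‖h i x‖} := by
    intro x i
    have : h i ((s x.val : ℂ) • x.val) = (s x.val : ℂ) * h i x.val := by
      simp [map_smul, smul_eq_mul]
    rw [this, norm_mul, Complex.norm_of_nonneg (le_trans zero_le_one (hs1 x.val))]
    exact hskey x.val x.2 i
  set f : C({x : Fin r → ℂ | ∀ i, h i x ≠ 0},
      {x : Fin r → ℂ | ∀ i, R i ≤ ‖h i x‖}) :=
    ⟨fun x => ⟨(s x.val : ℂ) • x.val, hmem x⟩,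
      Continuous.subtype_mk ((Complex.continuous_ofReal.comp hscont).smul
        continuous_subtype_val) _⟩ with hf
  refine ⟨⟨incl, f, ?_, ?_⟩⟩
  · -- f.comp incl = id
    have : f.comp incl = ContinuousMap.id _ := by
      ext x : 1
      apply Subtype.ext
      show (s x.val : ℂ) • x.val = x.val
      rw [hsPA x.val x.2]
      simp
    rw [this]
  · -- incl.comp f homotopic to id via linear scaling
    have hmemH : ∀ (t : unitInterval) (x : {x : Fin r → ℂ | ∀ i, h i x ≠ 0}),
        ((((1 - (t:ℝ)) * s x.val + (t:ℝ) : ℝ) : ℂ) • x.val) ∈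
          {x : Fin r → ℂ | ∀ i, h i x ≠ 0} := by
      intro t x i
      have hcpos : (0:ℝ) < (1 - (t:ℝ)) * s x.val + (t:ℝ) := by
        nlinarith [hs1 x.val, t.2.1, t.2.2]
      have : h i ((((1 - (t:ℝ)) * s x.val + (t:ℝ) : ℝ) : ℂ) • x.val)
          = (((1 - (t:ℝ)) * s x.val + (t:ℝ) : ℝ) : ℂ) * h i x.val := by
        simp [map_smul, smul_eq_mul]
      rw [this]
      exact mul_ne_zero (by exact_mod_cast hcpos.ne') (x.2 i)
    refine ⟨⟨⟨fun p => ⟨(((1 - (p.1:ℝ)) * s p.2.val + (p.1:ℝ) : ℝ) : ℂ) • p.2.val,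
        hmemH p.1 p.2⟩, ?_⟩, ?_, ?_⟩⟩
    · apply Continuous.subtype_mk
      apply Continuous.fun_smul
      · apply Complex.continuous_ofReal.comp
        apply Continuous.add
        · exact (continuous_const.sub
            (continuous_subtype_val.comp continuous_fst)).mul (hscont.comp continuous_snd)
        · exact continuous_subtype_val.comp continuous_fst
      · exact continuous_subtype_val.comp continuous_snd
    · intro x
      apply Subtype.ext
      show (((1 - (0:ℝ)) * s x.val + (0:ℝ) : ℝ) : ℂ) • x.val = (s x.val : ℂ) • x.val
      norm_num
    · intro x
      apply Subtype.ext
      show (((1 - (1:ℝ)) * s x.val + (1:ℝ) : ℝ) : ℂ) • x.val = x.val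
      norm_num
end
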